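/- Let G=(V,E) be a finite simple undirected graph and let y : E → ℝ≥0. Then there exists a matching M ⊆ E of G such that ∑_{{u,v} ∈ M} (∑_{e ∈ δ(u)} y_e) · (∑_{e ∈ δ(v)} y_e) ≥ ∑_{e ∈ E} y_e². -/

import Mathlib

open scoped Classical
open Finset

private lemma lift_mono {V : Type} [Fintype V] [DecidableEq V] (y : Sym2 V → ℝ)
    (S' S : Finset (Sym2 V)) (hss : S' ⊆ S) (hy : ∀ e ∈ S, 0 ≤ y e) (f : Sym2 V) :
    Sym2.lift
      ⟨fun u v => (∑ g ∈ S'.filter (fun g => u ∈ g), y g)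
          * (∑ g ∈ S'.filter (fun g => v ∈ g), y g), fun u v => mul_comm _ _⟩ f ≤
    Sym2.lift
      ⟨fun u v => (∑ g ∈ S.filter (fun g => u ∈ g), y g)
          * (∑ g ∈ S.filter (fun g => v ∈ g), y g), fun u v => mul_comm _ _⟩ f := by
  induction f using Sym2.ind with
  | _ a b =>
  simp only [Sym2.lift_mk]
  have h1 : ∀ w : V, ∑ g ∈ S'.filter (fun g => w ∈ g), y g ≤
      ∑ g ∈ S.filter (fun g => w ∈ g), y g := fun w =>
    Finset.sum_le_sum_of_subset_of_nonneg (Finset.filter_subset_filter _ hss)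
      (fun g hg _ => hy g (Finset.mem_filter.mp hg).1)
  have h0 : ∀ w : V, 0 ≤ ∑ g ∈ S'.filter (fun g => w ∈ g), y g := fun w =>
    Finset.sum_nonneg fun g hg => hy g (hss ((Finset.filter_subset _ _) hg))
  exact mul_le_mul (h1 a) (h1 b) (h0 b) (le_trans (h0 a) (h1 a))

private lemma aux_matching {V : Type} [Fintype V] [DecidableEq V] (y : Sym2 V → ℝ) :
    ∀ S : Finset (Sym2 V), (∀ e ∈ S, ¬ e.IsDiag) → (∀ e ∈ S, 0 ≤ y e) →
    ∃ M : Finset (Sym2 V), M ⊆ S ∧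
      (∀ e ∈ M, ∀ f ∈ M, e ≠ f → ∀ v : V, v ∈ e → v ∉ f) ∧
      ∑ e ∈ S, (y e) ^ 2 ≤
        ∑ e ∈ M,
          Sym2.lift
            ⟨fun u v => (∑ f ∈ S.filter (fun f => u ∈ f), y f)
                * (∑ f ∈ S.filter (fun f => v ∈ f), y f),
              fun u v => mul_comm _ _⟩ e := by
  intro S
  induction S using Finset.strongInduction with
  | _ S ih =>
  intro hdiag hy
  rcases S.eq_empty_or_nonempty with rfl | hne
  · exact ⟨∅, by simp⟩
  obtain ⟨e, heS, hemax⟩ := S.exists_max_image y hne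
  obtain ⟨⟨u, v⟩, he⟩ := e.exists_rep
  subst he
  have huv : u ≠ v := by
    have := hdiag _ heS
    simpa [Sym2.mk_isDiag_iff] using this
  have hue : u ∈ s(u, v) := by simp
  have hve : v ∈ s(u, v) := by simp
  set S' : Finset (Sym2 V) := S.filter (fun f => ¬ (u ∈ f ∨ v ∈ f)) with hS'def
  have hS'ss : S' ⊆ S := Finset.filter_subset _ _
  have heS' : s(u, v) ∉ S' := by
    simp [hS'def]
  have hS'lt : S' ⊂ S := Finset.ssubset_iff_of_subset hS'ss |>.mpr ⟨_, heS, heS'⟩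
  obtain ⟨M, hMss, hMmatch, hMsum⟩ := ih S' hS'lt
    (fun f hf => hdiag f (hS'ss hf)) (fun f hf => hy f (hS'ss hf))
  have heM : s(u, v) ∉ M := fun h => heS' (hMss h)
  refine ⟨insert s(u, v) M, ?_, ?_, ?_⟩
  · intro f hf
    rcases Finset.mem_insert.mp hf with rfl | hf
    · exact heS
    · exact hS'ss (hMss hf)
  · intro a ha b hb hab w hwa
    rcases Finset.mem_insert.mp ha with rfl | ha <;>
      rcases Finset.mem_insert.mp hb with rfl | hb
    · exact absurd rfl hab
    · have hb' := Finset.mem_filter.mp (hMss hb)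
      rcases Sym2.mem_iff.mp hwa with rfl | rfl <;> tauto
    · have ha' := Finset.mem_filter.mp (hMss ha)
      intro hwb
      rcases Sym2.mem_iff.mp hwb with rfl | rfl <;> tauto
    · exact hMmatch a ha b hb hab w hwa
  · -- main inequality
    set Yu : ℝ := ∑ f ∈ S.filter (fun f => u ∈ f), y f with hYu
    set Yv : ℝ := ∑ f ∈ S.filter (fun f => v ∈ f), y f with hYv
    have hye0 : 0 ≤ y s(u, v) := hy _ heS
    have hyeYu : y s(u, v) ≤ Yu :=
      Finset.single_le_sum (f := y) (fun f hf => hy f (Finset.mem_filter.mp hf).1)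
        (Finset.mem_filter.mpr ⟨heS, hue⟩)
    have hyeYv : y s(u, v) ≤ Yv :=
      Finset.single_le_sum (f := y) (fun f hf => hy f (Finset.mem_filter.mp hf).1)
        (Finset.mem_filter.mpr ⟨heS, hve⟩)
    -- decompose sum over S
    have hsplit : ∑ f ∈ S.filter (fun f => u ∈ f ∨ v ∈ f), y f ^ 2
        + ∑ f ∈ S', y f ^ 2 = ∑ f ∈ S, y f ^ 2 := by
      rw [hS'def]
      exact Finset.sum_filter_add_sum_filter_not S _ _
    set A : Finset (Sym2 V) := S.filter (fun f => u ∈ f ∨ v ∈ f) with hA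
    set T : Finset (Sym2 V) := S.filter (fun f => v ∈ f ∧ u ∉ f) with hT
    have hAsplit : ∑ f ∈ A, y f ^ 2
        = ∑ f ∈ S.filter (fun f => u ∈ f), y f ^ 2 + ∑ f ∈ T, y f ^ 2 := by
      rw [← Finset.sum_filter_add_sum_filter_not A (fun f => u ∈ f)]
      congr 1
      · congr 1
        rw [hA, Finset.filter_filter]
        apply Finset.filter_congr
        intro f _
        constructor
        · tauto
        · tauto
      · congr 1
        rw [hA, hT, Finset.filter_filter]
        apply Finset.filter_congr
        intro f _
        constructor
        · tauto
        · tauto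
    have h1 : ∑ f ∈ S.filter (fun f => u ∈ f), y f ^ 2 ≤ y s(u, v) * Yu := by
      rw [hYu, Finset.mul_sum]
      apply Finset.sum_le_sum
      intro f hf
      have hf' := Finset.mem_filter.mp hf
      have := hemax f hf'.1
      have := hy f hf'.1
      nlinarith
    have h2 : ∑ f ∈ T, y f ^ 2 ≤ y s(u, v) * ∑ f ∈ T, y f := by
      rw [Finset.mul_sum]
      apply Finset.sum_le_sum
      intro f hf
      have hf' := Finset.mem_filter.mp hf
      have := hemax f hf'.1
      have := hy f hf'.1
      nlinarith
    have heT : s(u, v) ∉ T := by simp [hT]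
    have h3 : ∑ f ∈ T, y f ≤ Yv - y s(u, v) := by
      have hsub : insert s(u, v) T ⊆ S.filter (fun f => v ∈ f) := by
        intro f hf
        rcases Finset.mem_insert.mp hf with rfl | hf
        · exact Finset.mem_filter.mpr ⟨heS, hve⟩
        · have hf' := Finset.mem_filter.mp hf
          exact Finset.mem_filter.mpr ⟨hf'.1, hf'.2.1⟩
      have := Finset.sum_le_sum_of_subset_of_nonneg hsub
        (fun f hf _ => hy f (Finset.mem_filter.mp hf).1) (f := y)
      rw [Finset.sum_insert heT] at this
      rw [hYv]; linarith
    have hAbound : ∑ f ∈ A, y f ^ 2 ≤ Yu * Yv := by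
      have h2' : ∑ f ∈ T, y f ^ 2 ≤ y s(u, v) * (Yv - y s(u, v)) := by
        calc ∑ f ∈ T, y f ^ 2 ≤ y s(u, v) * ∑ f ∈ T, y f := h2
          _ ≤ y s(u, v) * (Yv - y s(u, v)) := by
            apply mul_le_mul_of_nonneg_left h3 hye0
      rw [hAsplit]
      nlinarith [h1, h2', hyeYu, hyeYv, hye0]
    rw [Finset.sum_insert heM]
    have hlifte : Sym2.lift
        ⟨fun a b => (∑ f ∈ S.filter (fun f => a ∈ f), y f)
            * (∑ f ∈ S.filter (fun f => b ∈ f), y f),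
          fun a b => mul_comm _ _⟩ s(u, v) = Yu * Yv := by
      simp [Sym2.lift_mk, hYu, hYv]
    have hMmono : ∑ f ∈ M,
        Sym2.lift
          ⟨fun a b => (∑ g ∈ S'.filter (fun g => a ∈ g), y g)
              * (∑ g ∈ S'.filter (fun g => b ∈ g), y g),
            fun a b => mul_comm _ _⟩ f ≤
        ∑ f ∈ M,
        Sym2.lift
          ⟨fun a b => (∑ g ∈ S.filter (fun g => a ∈ g), y g)
              * (∑ g ∈ S.filter (fun g => b ∈ g), y g),
            fun a b => mul_comm _ _⟩ f :=
      Finset.sum_le_sum fun f _ => lift_mono y S' S hS'ss hy f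
    rw [hlifte]
    calc ∑ f ∈ S, y f ^ 2 = ∑ f ∈ A, y f ^ 2 + ∑ f ∈ S', y f ^ 2 := by
          rw [← hsplit]
      _ ≤ Yu * Yv + ∑ f ∈ M, Sym2.lift
          ⟨fun a b => (∑ g ∈ S'.filter (fun g => a ∈ g), y g)
              * (∑ g ∈ S'.filter (fun g => b ∈ g), y g),
            fun a b => mul_comm _ _⟩ f := add_le_add hAbound hMsum
      _ ≤ _ := add_le_add_right hMmono _


/-- For any finite simple graph `G = (V,E)` and any `y : E → ℝ≥0`
there exists a matching `M ⊆ E` such that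
`∑_{{u,v} ∈ M} y(δ(u))·y(δ(v)) ≥ ∑_{e ∈ E} y_e²`. -/
theorem stmt_3 {V : Type} [Fintype V] [DecidableEq V]
    (G : SimpleGraph V) [DecidableRel G.Adj]
    (y : Sym2 V → ℝ) (hy : ∀ e ∈ G.edgeFinset, 0 ≤ y e) :
    ∃ M : Finset (Sym2 V), M ⊆ G.edgeFinset ∧
      (∀ e ∈ M, ∀ f ∈ M, e ≠ f → ∀ v : V, v ∈ e → v ∉ f) ∧
      ∑ e ∈ G.edgeFinset, (y e) ^ 2 ≤
        ∑ e ∈ M,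
          Sym2.lift
            ⟨fun u v => (∑ f ∈ G.edgeFinset.filter (fun f => u ∈ f), y f)
                * (∑ f ∈ G.edgeFinset.filter (fun f => v ∈ f), y f),
              fun u v => mul_comm _ _⟩ e := by
  apply aux_matching y G.edgeFinset
  · intro e he
    exact G.not_isDiag_of_mem_edgeSet (SimpleGraph.mem_edgeFinset.mp he)
  · exact hy
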